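/- Let V̄_n be the n-dimensional k-vector space with basis x_1,…,x_n, with right Σ_n-action x_i·σ = x_{σ(i)}, and let d_i : V̄_n → V̄_{n-1} be the linear map sending x_j to x_j for j < i, to 0 for j = i, and to x_{j-1} for j > i. For a functor B from k-modules to k-modules define γ_n(B) = ∩_{i=1}^n Ker(B(d_i) : B(V̄_n) → B(V̄_{n-1})). Then for any short exact sequence of functors A ↪ B ↠ C (exact objectwise), the induced sequence γ_n(A) ↪ γ_n(B) ↠ γ_n(C) is a short exact sequence of k(Σ_n)-modules; i.e., γ_n is an exact functor. -/

import Mathlib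

open CategoryTheory

/-- The `n`-dimensional space `V̄_n = k^n` with basis `x_1, …, x_n`, as an object of
`ModuleCat k`. -/
noncomputable def Vbar (k : Type) [Field k] (n : ℕ) : ModuleCat k :=
  ModuleCat.of k (Fin n → k)

/-- The face map `d_i : V̄_{n+1} → V̄_n` sending `x_j ↦ x_j` for `j < i`, `x_i ↦ 0` and
`x_j ↦ x_{j-1}` for `j > i`; in coordinates it is precomposition with `Fin.succAbove i`. -/
noncomputable def dmap (k : Type) [Field k] (n : ℕ) (i : Fin (n + 1)) :
    Vbar k (n + 1) ⟶ Vbar k n :=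
  ModuleCat.ofHom (LinearMap.funLeft k k (Fin.succAbove i))

/-- The basis-permutation map `x_j ↦ x_{σ(j)}` on `V̄_{n+1}` for `σ ∈ Σ_{n+1}`. -/
noncomputable def permV (k : Type) [Field k] (n : ℕ) (σ : Equiv.Perm (Fin (n + 1))) :
    Vbar k (n + 1) ⟶ Vbar k (n + 1) :=
  ModuleCat.ofHom (LinearMap.funLeft k k ⇑σ.symm)

/-- `γ_{n+1}(B) = ∩_i Ker(B(d_i)) ⊆ B(V̄_{n+1})` for a functor `B` on `k`-modules. -/
noncomputable def gammaF (k : Type) [Field k] (n : ℕ) (B : ModuleCat k ⥤ ModuleCat k) :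
    Submodule k (B.obj (Vbar k (n + 1))) :=
  ⨅ i : Fin (n + 1), LinearMap.ker (B.map (dmap k n i)).hom


/- ### face/degeneracy combinatorics -/

noncomputable def smap (k : Type) [Field k] (n : ℕ) (i : Fin (n + 1)) :
    Vbar k n ⟶ Vbar k (n + 1) :=
  ModuleCat.ofHom (LinearMap.pi fun x =>
    if h : x = i then (0 : (Fin n → k) →ₗ[k] k)
    else LinearMap.proj ((finSuccAboveEquiv i).symm ⟨x, h⟩))

noncomputable def tmap (k : Type) [Field k] (n : ℕ) (i : Fin (n + 1)) :
    Vbar k (n + 1) ⟶ Vbar k (n + 1) :=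
  dmap k n i ≫ smap k n i

lemma succAbove_symm (n : ℕ) (i : Fin (n+1)) (x : Fin (n+1)) (h : x ≠ i) :
    i.succAbove ((finSuccAboveEquiv i).symm ⟨x, h⟩) = x := by
  have := (finSuccAboveEquiv i).apply_symm_apply ⟨x, h⟩
  rw [finSuccAboveEquiv_apply] at this
  exact congrArg Subtype.val this

lemma smap_apply (k : Type) [Field k] (n : ℕ) (i : Fin (n + 1)) (w : Vbar k n)
    (x : Fin (n+1)) :
    smap k n i w x =
      if h : x = i then 0 else w ((finSuccAboveEquiv i).symm ⟨x, h⟩) := by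
  change (LinearMap.pi fun x =>
    if h : x = i then (0 : (Fin n → k) →ₗ[k] k)
    else LinearMap.proj ((finSuccAboveEquiv i).symm ⟨x, h⟩)) w x = _
  show (if h : x = i then (0 : (Fin n → k) →ₗ[k] k)
    else LinearMap.proj ((finSuccAboveEquiv i).symm ⟨x, h⟩)) w = _
  split_ifs <;> rfl

lemma tmap_apply (k : Type) [Field k] (n : ℕ) (i : Fin (n + 1)) (v : Vbar k (n+1))
    (x : Fin (n+1)) : tmap k n i v x = if x = i then 0 else v x := by
  show smap k n i (dmap k n i v) x = _
  rw [smap_apply]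
  by_cases h : x = i
  · simp [h]
  · rw [dif_neg h, if_neg h]
    show (LinearMap.funLeft k k (Fin.succAbove i) v) _ = v x
    show v (i.succAbove ((finSuccAboveEquiv i).symm ⟨x, h⟩)) = v x
    rw [succAbove_symm]

lemma tmap_dmap (k : Type) [Field k] (n : ℕ) (i : Fin (n + 1)) :
    tmap k n i ≫ dmap k n i = dmap k n i := by
  ext v
  show LinearMap.funLeft k k (Fin.succAbove i) (tmap k n i v)
      = LinearMap.funLeft k k (Fin.succAbove i) v
  funext y
  simp only [LinearMap.funLeft_apply]
  show tmap k n i v (i.succAbove y) = v (i.succAbove y)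
  rw [tmap_apply, if_neg (Fin.succAbove_ne i y)]

lemma tmap_comm (k : Type) [Field k] (n : ℕ) (i j : Fin (n + 1)) :
    tmap k n i ≫ tmap k n j = tmap k n j ≫ tmap k n i := by
  ext v
  show tmap k n j (tmap k n i v) = tmap k n i (tmap k n j v)
  funext x
  by_cases hi : x = i <;> by_cases hj : x = j <;> simp [tmap_apply, hi, hj]

lemma tmap_idem (k : Type) [Field k] (n : ℕ) (i : Fin (n + 1)) :
    tmap k n i ≫ tmap k n i = tmap k n i := by
  ext v
  show tmap k n i (tmap k n i v) = tmap k n i v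
  funext x
  simp only [tmap_apply]
  split_ifs <;> rfl

/-- The permutation equivariance of the face maps: `d_i ∘ σ = τ ∘ d_{σ⁻¹ i}` for a
suitable map `τ` on `V̄_n`. -/
lemma perm_dmap (k : Type) [Field k] (n : ℕ) (σ : Equiv.Perm (Fin (n + 1)))
    (i : Fin (n + 1)) :
    permV k n σ ≫ dmap k n i =
      dmap k n (σ.symm i) ≫ ModuleCat.ofHom (LinearMap.funLeft k k
        (fun j => (finSuccAboveEquiv (σ.symm i)).symm
          ⟨σ.symm (i.succAbove j), fun h => Fin.succAbove_ne i j (σ.symm.injective h)⟩)) := by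
  ext v
  funext x
  show v (σ.symm (i.succAbove x)) = v ((σ.symm i).succAbove _)
  rw [succAbove_symm]

lemma permV_inv_comp (k : Type) [Field k] (n : ℕ) (σ : Equiv.Perm (Fin (n + 1))) :
    permV k n σ⁻¹ ≫ permV k n σ = 𝟙 (Vbar k (n + 1)) := by
  ext v
  funext x
  show v ((σ⁻¹).symm (σ.symm x)) = v x
  have : (σ⁻¹).symm (σ.symm x) = x := by
    rw [Equiv.Perm.inv_def, Equiv.symm_symm, Equiv.apply_symm_apply]
  rw [this]

section EP
universe uv
variable {k : Type} [Field k] {M N : Type uv} [AddCommGroup M] [Module k M]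
  [AddCommGroup N] [Module k N] {ι : Type} [DecidableEq ι]

noncomputable def EP (T : ι → Module.End k M) (hcomm : ∀ a b, Commute (T a) (T b))
    (s : Finset ι) : Module.End k M :=
  s.noncommProd (fun a => 1 - T a)
    (fun a _ b _ _ =>
      (Commute.one_right (1 - T a)).sub_right ((Commute.one_left (T b)).sub_left (hcomm a b)))

omit [DecidableEq ι] in
lemma EP_empty (T : ι → Module.End k M) (hcomm : ∀ a b, Commute (T a) (T b)) :
    EP T hcomm ∅ = 1 :=
  Finset.noncommProd_empty _ _

lemma EP_insert (T : ι → Module.End k M) (hcomm : ∀ a b, Commute (T a) (T b))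
    {i : ι} {s : Finset ι} (hi : i ∉ s) :
    EP T hcomm (insert i s) = (1 - T i) * EP T hcomm s :=
  Finset.noncommProd_insert_of_notMem _ _ _ _ hi

lemma EP_ann (T : ι → Module.End k M) (hcomm : ∀ a b, Commute (T a) (T b))
    (hid : ∀ a, T a * T a = T a) (s : Finset ι) (i : ι) (hi : i ∈ s) :
    T i * EP T hcomm s = 0 := by
  induction s using Finset.induction_on with
  | empty => cases hi
  | @insert a s ha ih =>
    rw [EP_insert T hcomm ha, ← mul_assoc]
    rcases Finset.mem_insert.1 hi with h | h
    · subst h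
      have : T i * (1 - T i) = 0 := by
        rw [mul_sub, mul_one, hid, sub_self]
      rw [this, zero_mul]
    · have hc : Commute (T i) (1 - T a) :=
        (Commute.one_right (T i)).sub_right (hcomm i a)
      rw [hc.eq, mul_assoc, ih h, mul_zero]

lemma EP_fix (T : ι → Module.End k M) (hcomm : ∀ a b, Commute (T a) (T b))
    (s : Finset ι) (x : M) (hx : ∀ i ∈ s, T i x = 0) :
    EP T hcomm s x = x := by
  induction s using Finset.induction_on with
  | empty => rw [EP_empty]; rfl
  | @insert a s ha ih =>
    rw [EP_insert T hcomm ha]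
    have h1 : EP T hcomm s x = x := ih fun i hi => hx i (Finset.mem_insert_of_mem hi)
    show (1 - T a) (EP T hcomm s x) = x
    rw [h1, LinearMap.sub_apply, Module.End.one_apply, hx a (Finset.mem_insert_self a s),
      sub_zero]

lemma EP_natural (T : ι → Module.End k M) (T' : ι → Module.End k N)
    (hcomm : ∀ a b, Commute (T a) (T b)) (hcomm' : ∀ a b, Commute (T' a) (T' b))
    (g : M →ₗ[k] N) (hnat : ∀ i x, g (T i x) = T' i (g x)) (s : Finset ι) (x : M) :
    g (EP T hcomm s x) = EP T' hcomm' s (g x) := by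
  induction s using Finset.induction_on with
  | empty => rw [EP_empty, EP_empty]; rfl
  | @insert a s ha ih =>
    rw [EP_insert T hcomm ha, EP_insert T' hcomm' ha]
    show g ((1 - T a) (EP T hcomm s x)) = (1 - T' a) (EP T' hcomm' s (g x))
    rw [LinearMap.sub_apply, Module.End.one_apply, map_sub, hnat, ih,
      LinearMap.sub_apply, Module.End.one_apply]
end EP

section Functors
variable (k : Type) [Field k] (n : ℕ)

/-- The idempotent `F(t_i)` on `F(V̄_{n+1})`. -/
noncomputable def TT (F : ModuleCat k ⥤ ModuleCat k) (i : Fin (n + 1)) :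
    Module.End k (F.obj (Vbar k (n + 1))) :=
  (F.map (tmap k n i)).hom

lemma TT_comm (F : ModuleCat k ⥤ ModuleCat k) (a b : Fin (n + 1)) :
    Commute (TT k n F a) (TT k n F b) := by
  show TT k n F a * TT k n F b = TT k n F b * TT k n F a
  have h1 : TT k n F a * TT k n F b = (F.map (tmap k n b ≫ tmap k n a)).hom := by
    rw [F.map_comp]; rfl
  have h2 : TT k n F b * TT k n F a = (F.map (tmap k n a ≫ tmap k n b)).hom := by
    rw [F.map_comp]; rfl
  rw [h1, h2, tmap_comm]

lemma TT_idem (F : ModuleCat k ⥤ ModuleCat k) (a : Fin (n + 1)) :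
    TT k n F a * TT k n F a = TT k n F a := by
  have h1 : TT k n F a * TT k n F a = (F.map (tmap k n a ≫ tmap k n a)).hom := by
    rw [F.map_comp]; rfl
  rw [h1, tmap_idem]; rfl

lemma ker_TT (F : ModuleCat k ⥤ ModuleCat k) (i : Fin (n + 1)) :
    LinearMap.ker (F.map (dmap k n i)).hom = LinearMap.ker (TT k n F i) := by
  ext x
  simp only [LinearMap.mem_ker]
  constructor
  · intro hx
    show (F.map (tmap k n i)).hom x = 0
    rw [tmap, F.map_comp]
    show (F.map (smap k n i)).hom ((F.map (dmap k n i)).hom x) = 0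
    rw [hx, map_zero]
  · intro hx
    have : F.map (dmap k n i) = F.map (tmap k n i ≫ dmap k n i) := by rw [tmap_dmap]
    rw [this, F.map_comp]
    show (F.map (dmap k n i)).hom ((F.map (tmap k n i)).hom x) = 0
    rw [show (F.map (tmap k n i)).hom x = 0 from hx, map_zero]

lemma gammaF_eq (F : ModuleCat k ⥤ ModuleCat k) :
    gammaF k n F = ⨅ i : Fin (n + 1), LinearMap.ker (TT k n F i) := by
  unfold gammaF
  exact iInf_congr (ker_TT k n F)

lemma mem_gammaF (F : ModuleCat k ⥤ ModuleCat k) (x : F.obj (Vbar k (n + 1))) :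
    x ∈ gammaF k n F ↔ ∀ i, (F.map (dmap k n i)).hom x = 0 := by
  simp [gammaF, Submodule.mem_iInf, LinearMap.mem_ker]

/-- the natural projection onto `γ`. -/
noncomputable def EE (F : ModuleCat k ⥤ ModuleCat k) :
    Module.End k (F.obj (Vbar k (n + 1))) :=
  EP (TT k n F) (TT_comm k n F) Finset.univ

lemma EE_mem (F : ModuleCat k ⥤ ModuleCat k) (x : F.obj (Vbar k (n + 1))) :
    EE k n F x ∈ gammaF k n F := by
  rw [gammaF_eq, Submodule.mem_iInf]
  intro i
  rw [LinearMap.mem_ker]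
  have h := EP_ann (TT k n F) (TT_comm k n F) (TT_idem k n F) Finset.univ i
    (Finset.mem_univ i)
  show TT k n F i (EE k n F x) = 0
  have h2 : TT k n F i (EE k n F x)
      = (TT k n F i * EP (TT k n F) (TT_comm k n F) Finset.univ) x := rfl
  rw [h2, h]
  rfl

lemma EE_fix (F : ModuleCat k ⥤ ModuleCat k) (x : F.obj (Vbar k (n + 1)))
    (hx : x ∈ gammaF k n F) : EE k n F x = x := by
  rw [gammaF_eq, Submodule.mem_iInf] at hx
  exact EP_fix _ _ _ _ fun i _ => hx i

end Functors

/-- `γ_n` is an exact functor: a short exact sequence of functors `A ↪ B ↠ C` (objectwise exact)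
induces a short exact sequence `γ_n(A) ↪ γ_n(B) ↠ γ_n(C)` of `k(Σ_n)`-modules (the `Σ_n`-module
structure being induced by permuting the basis of `V̄_n`, which each `γ_n` is invariant under). -/
theorem stmt4 (k : Type) [Field k] (n : ℕ)
    (A B C : ModuleCat k ⥤ ModuleCat k) (j : A ⟶ B) (p : B ⟶ C)
    (hinj : ∀ V : ModuleCat k, Function.Injective (j.app V))
    (hsurj : ∀ V : ModuleCat k, Function.Surjective (p.app V))
    (hexact : ∀ V : ModuleCat k, LinearMap.range (j.app V).hom = LinearMap.ker (p.app V).hom) :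
    -- the Σ_{n+1}-module structure: each γ is invariant under the permutation action
    (∀ (F : ModuleCat k ⥤ ModuleCat k) (σ : Equiv.Perm (Fin (n + 1))),
        Submodule.map (F.map (permV k n σ)).hom (gammaF k n F) = gammaF k n F) ∧
    -- γ(j) is injective with image landing in γ(B)
    Function.Injective (j.app (Vbar k (n + 1))) ∧
    Submodule.map (j.app (Vbar k (n + 1))).hom (gammaF k n A) ≤ gammaF k n B ∧
    -- exactness at γ(B)
    Submodule.map (j.app (Vbar k (n + 1))).hom (gammaF k n A)
      = gammaF k n B ⊓ LinearMap.ker (p.app (Vbar k (n + 1))).hom ∧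
    -- γ(p) is surjective onto γ(C)
    Submodule.map (p.app (Vbar k (n + 1))).hom (gammaF k n B) = gammaF k n C := by
  have natlem : ∀ (F G : ModuleCat k ⥤ ModuleCat k) (η : F ⟶ G) (X Y : ModuleCat k)
      (f : X ⟶ Y) (x : F.obj X), (η.app Y).hom ((F.map f).hom x) = (G.map f).hom ((η.app X).hom x) :=
    fun F G η X Y f x => LinearMap.congr_fun (congrArg ModuleCat.Hom.hom (η.naturality f)) x
  have perm_le : ∀ (F : ModuleCat k ⥤ ModuleCat k) (σ : Equiv.Perm (Fin (n + 1))),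
      Submodule.map (F.map (permV k n σ)).hom (gammaF k n F) ≤ gammaF k n F := by
    intro F σ
    rintro _ ⟨x, hx, rfl⟩
    simp only [SetLike.mem_coe] at hx ⊢
    rw [mem_gammaF] at hx ⊢
    intro i
    have h1 : (F.map (dmap k n i)).hom ((F.map (permV k n σ)).hom x)
        = (F.map (permV k n σ ≫ dmap k n i)).hom x := by rw [F.map_comp]; rfl
    rw [h1, perm_dmap]
    erw [F.map_comp]
    show (F.map _).hom ((F.map (dmap k n (σ.symm i))).hom x) = 0
    rw [hx (σ.symm i), map_zero]
  have jle : Submodule.map (j.app (Vbar k (n + 1))).hom (gammaF k n A) ≤ gammaF k n B := by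
    rintro _ ⟨x, hx, rfl⟩
    simp only [SetLike.mem_coe] at hx ⊢
    rw [mem_gammaF] at hx ⊢
    intro i
    rw [← natlem A B j _ _ (dmap k n i) x, hx i, map_zero]
  refine ⟨?_, hinj _, jle, ?_, ?_⟩
  · intro F σ
    refine le_antisymm (perm_le F σ) ?_
    intro x hx
    refine ⟨F.map (permV k n σ⁻¹) x, perm_le F σ⁻¹ ⟨x, hx, rfl⟩, ?_⟩
    show (F.map (permV k n σ)).hom ((F.map (permV k n σ⁻¹)).hom x) = x
    have h : F.map (permV k n σ⁻¹) ≫ F.map (permV k n σ) = 𝟙 _ := by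
      rw [← F.map_comp, permV_inv_comp, F.map_id]
    exact LinearMap.congr_fun (congrArg ModuleCat.Hom.hom h) x
  · refine le_antisymm ?_ ?_
    · rintro _ ⟨x, hx, rfl⟩
      refine Submodule.mem_inf.2 ⟨jle ⟨x, hx, rfl⟩, ?_⟩
      rw [LinearMap.mem_ker]
      have h : (j.app (Vbar k (n + 1))).hom x ∈ LinearMap.range (j.app (Vbar k (n + 1))).hom :=
        ⟨x, rfl⟩
      rw [hexact] at h
      exact h
    · rintro x ⟨hxγ, hxk⟩
      have h : x ∈ LinearMap.range (j.app (Vbar k (n + 1))).hom := by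
        rw [hexact]; exact hxk
      obtain ⟨a, rfl⟩ := h
      refine ⟨a, ?_, rfl⟩
      simp only [SetLike.mem_coe]
      rw [mem_gammaF]
      intro i
      apply hinj (Vbar k n)
      rw [map_zero, natlem A B j _ _ (dmap k n i) a]
      simp only [SetLike.mem_coe] at hxγ
      rw [mem_gammaF] at hxγ
      exact hxγ i
  · refine le_antisymm ?_ ?_
    · rintro _ ⟨x, hx, rfl⟩
      simp only [SetLike.mem_coe] at hx ⊢
      rw [mem_gammaF] at hx ⊢
      intro i
      rw [← natlem B C p _ _ (dmap k n i) x, hx i, map_zero]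
    · intro c hc
      obtain ⟨b, rfl⟩ := hsurj _ c
      refine ⟨EE k n B b, EE_mem k n B b, ?_⟩
      show (p.app (Vbar k (n + 1))).hom (EE k n B b) = (p.app (Vbar k (n + 1))).hom b
      have hnat : ∀ (i : Fin (n + 1)) (x : B.obj (Vbar k (n + 1))),
          (p.app (Vbar k (n + 1))).hom (TT k n B i x) = TT k n C i ((p.app (Vbar k (n + 1))).hom x) :=
        fun i x => natlem B C p _ _ (tmap k n i) x
      have key := EP_natural (TT k n B) (TT k n C) (TT_comm k n B) (TT_comm k n C)
        (p.app (Vbar k (n + 1))).hom hnat Finset.univ b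
      calc (p.app (Vbar k (n + 1))).hom (EE k n B b) = EE k n C ((p.app (Vbar k (n + 1))).hom b) := key
        _ = (p.app (Vbar k (n + 1))).hom b := EE_fix k n C _ hc
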